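/- Let m ≥ 1 and let λ be a Salem number of degree 2m with minimal polynomial F and discriminant d_λ. Then d_λ ≡ (-1)^m · F(1)·F(-1) modulo squares of nonzero rationals, i.e. d_λ · (-1)^m · F(1)·F(-1) is a square in ℚ. -/

import Mathlib

open Polynomial

/-- The product `∏_{β ≠ δ} (β - δ)` over ordered pairs of distinct entries of a
list (for a separable polynomial, over its list of complex roots). -/
noncomputable def pairProd (l : List ℂ) : ℂ :=
  ∏ i : Fin l.length, ∏ j : Fin l.length,
    if i = j then 1 else (l.get i - l.get j)

/-- The discriminant `(-1)^{n(n-1)/2} ∏_{β ≠ δ} (β - δ)` of a rational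
polynomial of degree `n`, computed from its complex roots. -/
noncomputable def polyDisc (F : Polynomial ℚ) : ℂ :=
  (-1) ^ (F.natDegree * (F.natDegree - 1) / 2) * pairProd (F.aroots ℂ).toList

open Finset IntermediateField

lemma pairProd_eq (l : List ℂ) :
    pairProd l = ∏ i : Fin l.length, ∏ j ∈ Finset.univ.erase i, (l.get i - l.get j) := by
  unfold pairProd
  refine Finset.prod_congr rfl fun i _ => ?_
  rw [← Finset.mul_prod_erase Finset.univ _ (Finset.mem_univ i), if_pos rfl, one_mul]
  refine Finset.prod_congr rfl fun j hj => ?_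
  rw [if_neg (Ne.symm (Finset.ne_of_mem_erase hj))]

lemma prodErase_image {ι : Type*} [Fintype ι] [DecidableEq ι] (u : ι → ℂ)
    (hu : Function.Injective u) :
    ∏ x ∈ Finset.univ.image u, ∏ y ∈ (Finset.univ.image u).erase x, (x - y)
      = ∏ i : ι, ∏ j ∈ Finset.univ.erase i, (u i - u j) := by
  rw [Finset.prod_image (fun a _ b _ h => hu h)]
  refine Finset.prod_congr rfl fun i _ => ?_
  rw [← Finset.image_erase hu, Finset.prod_image (fun a _ b _ h => hu h)]

lemma pairProd_nodup (l : List ℂ) (hl : l.Nodup) :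
    pairProd l = ∏ x ∈ l.toFinset, ∏ y ∈ l.toFinset.erase x, (x - y) := by
  have hinj : Function.Injective l.get := List.nodup_iff_injective_get.mp hl
  have himg : Finset.univ.image l.get = l.toFinset := by
    ext x
    simp [List.mem_iff_get, eq_comm]
  rw [pairProd_eq, ← prodErase_image l.get hinj, himg]

lemma prodErase_sq (n : ℕ) (v : Fin n → ℂ) :
    ∏ i : Fin n, ∏ j ∈ Finset.univ.erase i, (v i - v j)
      = (-1) ^ (∑ i : Fin n, (Finset.Ioi i).card) *
        ∏ i : Fin n, ∏ j ∈ Finset.Ioi i, (v j - v i) ^ 2 := by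
  have hsplit : ∀ i : Fin n, (Finset.univ.erase i) = Finset.Ioi i ∪ Finset.Iio i := by
    intro i; ext j
    simp [Finset.mem_erase, Finset.mem_Ioi, Finset.mem_Iio, lt_or_lt_iff_ne, or_comm, ne_comm]
  have hdisj : ∀ i : Fin n, Disjoint (Finset.Ioi i) (Finset.Iio i) := by
    intro i
    simp [Finset.disjoint_left]
    intro j hj; exact le_of_lt hj
  calc ∏ i : Fin n, ∏ j ∈ Finset.univ.erase i, (v i - v j)
      = ∏ i : Fin n, ((∏ j ∈ Finset.Ioi i, (v i - v j)) * ∏ j ∈ Finset.Iio i, (v i - v j)) := by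
        refine Finset.prod_congr rfl fun i _ => ?_
        rw [hsplit i, Finset.prod_union (hdisj i)]
    _ = (∏ i : Fin n, ∏ j ∈ Finset.Ioi i, (v i - v j)) *
        ∏ i : Fin n, ∏ j ∈ Finset.Iio i, (v i - v j) := Finset.prod_mul_distrib
    _ = (∏ i : Fin n, ∏ j ∈ Finset.Ioi i, (v i - v j)) *
        ∏ i : Fin n, ∏ j ∈ Finset.Ioi i, (v j - v i) := by
        congr 1
        rw [Finset.prod_sigma', Finset.prod_sigma']
        refine Finset.prod_nbij' (fun p => ⟨p.2, p.1⟩) (fun p => ⟨p.2, p.1⟩) ?_ ?_ ?_ ?_ ?_ <;>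
          simp [Finset.mem_sigma, Finset.mem_Ioi, Finset.mem_Iio]
    _ = ∏ i : Fin n, ∏ j ∈ Finset.Ioi i, ((v i - v j) * (v j - v i)) := by
        rw [← Finset.prod_mul_distrib]
        refine Finset.prod_congr rfl fun i _ => Finset.prod_mul_distrib.symm
    _ = ∏ i : Fin n, ∏ j ∈ Finset.Ioi i, ((-1) * (v j - v i) ^ 2) := by
        refine Finset.prod_congr rfl fun i _ => Finset.prod_congr rfl fun j _ => by ring
    _ = (-1) ^ (∑ i : Fin n, (Finset.Ioi i).card) *
        ∏ i : Fin n, ∏ j ∈ Finset.Ioi i, (v j - v i) ^ 2 := by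
        rw [Finset.prod_congr rfl fun i (_ : i ∈ Finset.univ) => Finset.prod_mul_distrib]
        rw [Finset.prod_mul_distrib]
        congr 1
        rw [Finset.prod_congr rfl fun i (_ : i ∈ Finset.univ) => Finset.prod_const (-1 : ℂ)]
        rw [Finset.prod_pow_eq_pow_sum]

lemma DF_biUnion (t : Finset ℂ) (b c : ℂ → ℂ)
    (h1 : ∀ α ∈ t, b α + c α = α) (h2 : ∀ α ∈ t, b α * c α = 1)
    (h3 : ∀ α ∈ t, b α ≠ c α) :
    (∏ x ∈ t.biUnion (fun α => {b α, c α}),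
      ∏ y ∈ (t.biUnion (fun α => {b α, c α})).erase x, (x - y))
    = (∏ α ∈ t, (2 - α)) * (∏ α ∈ t, (2 + α)) *
        (∏ α ∈ t, ∏ β ∈ t.erase α, (α - β)) ^ 2 := by
  classical
  set pair : ℂ → Finset ℂ := fun α => {b α, c α} with hpair
  set s := t.biUnion pair with hs
  -- every element of pair α is a root of x² - αx + 1
  have hq : ∀ α ∈ t, ∀ x ∈ pair α, x ^ 2 - α * x + 1 = 0 := by
    intro α hα x hx
    have e1 := h1 α hα
    have e2 := h2 α hα
    rcases Finset.mem_insert.mp hx with rfl | hx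
    · linear_combination (b α) * e1 - e2
    · rw [Finset.mem_singleton.mp hx]
      linear_combination (c α) * e1 - e2
  -- disjointness
  have hd : ∀ α ∈ t, ∀ α' ∈ t, α ≠ α' → Disjoint (pair α) (pair α') := by
    intro α hα α' hα' hne
    rw [Finset.disjoint_left]
    intro x hx hx'
    have q1 := hq α hα x hx
    have q2 := hq α' hα' x hx'
    have hx0 : x ≠ 0 := by
      rintro rfl; norm_num at q1
    have h5 : (α - α') * x = 0 := by linear_combination q2 - q1
    rcases mul_eq_zero.mp h5 with h | h
    · exact hne (sub_eq_zero.mp h)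
    · exact hx0 h
  have hpd : Set.PairwiseDisjoint (↑t) pair := by
    intro α hα α' hα' hne
    exact hd α hα α' hα' hne
  -- erase decomposition
  have hsplit : ∀ α ∈ t, ∀ x ∈ pair α,
      s.erase x = ((pair α).erase x) ∪ ((t.erase α).biUnion pair) := by
    intro α hα x hx
    ext y
    simp only [Finset.mem_erase, Finset.mem_union, Finset.mem_biUnion, hs]
    constructor
    · rintro ⟨hyx, α', hα', hy⟩
      by_cases hαα : α' = α
      · subst hαα; exact Or.inl ⟨hyx, hy⟩
      · exact Or.inr ⟨α', ⟨hαα, hα'⟩, hy⟩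
    · rintro (⟨hyx, hy⟩ | ⟨α', ⟨hαα, hα'⟩, hy⟩)
      · exact ⟨hyx, α, hα, hy⟩
      · refine ⟨fun hyx => ?_, α', hα', hy⟩
        subst hyx
        exact (Finset.disjoint_left.mp (hd α' hα' α hα hαα) hy) hx
  have hpd2 : ∀ α ∈ t, Set.PairwiseDisjoint ↑(t.erase α) pair := by
    intro α hα
    exact hpd.subset (by intro z hz; exact Finset.mem_of_mem_erase hz)
  have hdisj2 : ∀ α ∈ t, ∀ x ∈ pair α,
      Disjoint ((pair α).erase x) ((t.erase α).biUnion pair) := by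
    intro α hα x hx
    rw [Finset.disjoint_left]
    intro y hy hy'
    rcases Finset.mem_biUnion.mp hy' with ⟨α', hα', hy''⟩
    have := Finset.disjoint_left.mp
      (hd α hα α' (Finset.mem_of_mem_erase hα') (fun h => (Finset.mem_erase.mp hα').1 h.symm))
      (Finset.mem_of_mem_erase hy)
    exact this hy''
  -- main calc
  have step1 : (∏ x ∈ s, ∏ y ∈ s.erase x, (x - y))
      = ∏ α ∈ t, ∏ x ∈ pair α, ∏ y ∈ s.erase x, (x - y) :=
    Finset.prod_biUnion hpd
  rw [step1]
  have step2 : ∀ α ∈ t,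
      (∏ x ∈ pair α, ∏ y ∈ s.erase x, (x - y))
        = ((2 - α) * (2 + α)) * ∏ α' ∈ t.erase α, (α - α') ^ 2 := by
    intro α hα
    have e1 := h1 α hα
    have e2 := h2 α hα
    have hbc := h3 α hα
    have inner : ∀ x ∈ pair α, (∏ y ∈ s.erase x, (x - y))
        = (∏ y ∈ (pair α).erase x, (x - y)) *
          ∏ α' ∈ t.erase α, ∏ y ∈ pair α', (x - y) := by
      intro x hx
      rw [hsplit α hα x hx, Finset.prod_union (hdisj2 α hα x hx),
        Finset.prod_biUnion (hpd2 α hα)]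
    rw [Finset.prod_congr rfl inner, Finset.prod_mul_distrib]
    have fst : (∏ x ∈ pair α, ∏ y ∈ (pair α).erase x, (x - y)) = (2 - α) * (2 + α) := by
      have hememb : (pair α).erase (b α) = {c α} := by
        show ({b α, c α} : Finset ℂ).erase (b α) = {c α}
        rw [Finset.erase_insert (by simpa using hbc)]
      have hememc : (pair α).erase (c α) = {b α} := by
        show ({b α, c α} : Finset ℂ).erase (c α) = {b α}
        rw [Finset.pair_comm, Finset.erase_insert (by simpa using hbc.symm)]
      rw [show pair α = {b α, c α} from rfl, Finset.prod_pair hbc, hememb, hememc,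
        Finset.prod_singleton, Finset.prod_singleton]
      linear_combination (-(b α + c α + α)) * e1 + 4 * e2
    have snd : (∏ x ∈ pair α, ∏ α' ∈ t.erase α, ∏ y ∈ pair α', (x - y))
        = ∏ α' ∈ t.erase α, (α - α') ^ 2 := by
      rw [Finset.prod_comm]
      refine Finset.prod_congr rfl fun α' hα' => ?_
      have hα't : α' ∈ t := Finset.mem_of_mem_erase hα'
      have e1' := h1 α' hα't
      have e2' := h2 α' hα't
      have key : ∀ x ∈ pair α, (∏ y ∈ pair α', (x - y)) = (α - α') * x := by
        intro x hx
        have qx := hq α hα x hx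
        rw [show pair α' = {b α', c α'} from rfl,
          Finset.prod_pair (h3 α' hα't)]
        linear_combination qx - x * e1' + e2'
      rw [Finset.prod_congr rfl key, show pair α = {b α, c α} from rfl,
        Finset.prod_pair hbc]
      linear_combination ((α - α') ^ 2) * e2
    rw [fst, snd]
  rw [Finset.prod_congr rfl step2]
  rw [Finset.prod_mul_distrib, Finset.prod_mul_distrib, ← Finset.prod_pow]
  rw [Finset.prod_congr rfl fun α (_ : α ∈ t) => (Finset.prod_pow (t.erase α) 2 fun α' => (α - α')).symm]

set_option maxHeartbeats 1000000 in
set_option synthInstance.maxHeartbeats 400000 in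
lemma deg_trace_poly (m : ℕ) (lam : ℝ) (hQint : IsIntegral ℚ lam)
    (hdeg : (minpoly ℚ lam).natDegree = 2 * m)
    (hinv : Polynomial.aeval lam⁻¹ (minpoly ℚ lam) = 0)
    (hne : lam⁻¹ ≠ lam) :
    (minpoly ℚ (lam + lam⁻¹)).natDegree = m := by
  classical
  have hlam0 : lam ≠ 0 := by rintro rfl; simp at hne
  set μ := lam + lam⁻¹ with hμ
  have hinvint : IsIntegral ℚ lam⁻¹ := ⟨minpoly ℚ lam, minpoly.monic hQint, hinv⟩
  have hμint : IsIntegral ℚ μ := hQint.add hinvint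
  set E : IntermediateField ℚ ℝ := ℚ⟮lam⟯ with hE
  set K : IntermediateField ℚ ℝ := ℚ⟮μ⟯ with hK
  have hlamE : lam ∈ E := mem_adjoin_simple_self ℚ lam
  have hμE : μ ∈ E := add_mem hlamE (inv_mem hlamE)
  have hKE : K ≤ E := by
    rw [hK, adjoin_le_iff]
    simpa using hμE
  have hfinE : Module.finrank ℚ E = 2 * m := by
    rw [hE, adjoin.finrank hQint, hdeg]
  have hfinK : Module.finrank ℚ K = (minpoly ℚ μ).natDegree := adjoin.finrank hμint
  -- the embedding sending lam to lam⁻¹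
  have hroot : (lam⁻¹ : ℝ) ∈ (minpoly ℚ lam).aroots ℝ := by
    rw [Polynomial.mem_aroots]
    exact ⟨minpoly.ne_zero hQint, hinv⟩
  set σ : E →ₐ[ℚ] ℝ := (algHomAdjoinIntegralEquiv ℚ hQint).symm ⟨lam⁻¹, hroot⟩ with hσ
  have hσgen : σ (AdjoinSimple.gen ℚ lam) = lam⁻¹ :=
    algHomAdjoinIntegralEquiv_symm_apply_gen ℚ hQint _
  -- lam is not in K
  have hlamK : lam ∉ K := by
    intro hlamK
    have hτ : (σ.comp (IntermediateField.inclusion hKE)) = K.val := by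
      refine PowerBasis.algHom_ext (IntermediateField.adjoin.powerBasis hμint) ?_
      rw [IntermediateField.adjoin.powerBasis_gen]
      show σ (IntermediateField.inclusion hKE (AdjoinSimple.gen ℚ μ)) = μ
      have hval : (IntermediateField.inclusion hKE (AdjoinSimple.gen ℚ μ) : ℝ) = μ := rfl
      have hgen : IntermediateField.inclusion hKE (AdjoinSimple.gen ℚ μ)
          = AdjoinSimple.gen ℚ lam + (AdjoinSimple.gen ℚ lam)⁻¹ := by
        apply Subtype.ext
        simp [hval]
        rfl
      rw [hgen, map_add, map_inv₀, hσgen, inv_inv, hμ]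
      ring
    have h2 := DFunLike.congr_fun hτ (⟨lam, hlamK⟩ : K)
    have hgenlam : IntermediateField.inclusion hKE ⟨lam, hlamK⟩ = AdjoinSimple.gen ℚ lam :=
      Subtype.ext rfl
    change σ (IntermediateField.inclusion hKE ⟨lam, hlamK⟩) = lam at h2
    rw [hgenlam, hσgen] at h2
    exact hne h2
  -- lam is quadratic over K
  have hKint : IsIntegral K lam := hQint.tower_top
  have hfKlow : (minpoly K lam).natDegree ≤ 2 := by
    have hμK : μ ∈ K := mem_adjoin_simple_self ℚ μ
    set bb : K := -(⟨μ, hμK⟩ : K) with hbb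
    set p : K[X] := Polynomial.C (1 : K) * X ^ 2 + Polynomial.C bb * X
      + Polynomial.C 1 with hp
    have hbmap : (algebraMap K ℝ) bb = -μ := rfl
    have hpeval : Polynomial.aeval lam p = 0 := by
      rw [hp]
      simp only [map_add, map_mul, map_pow, Polynomial.aeval_C, Polynomial.aeval_X, map_one,
        hbmap, one_mul]
      rw [hμ]
      field_simp
      ring
    have hp0 : p ≠ 0 := by
      intro h0
      have := Polynomial.natDegree_quadratic (a := (1:K)) (b := bb) (c := 1) one_ne_zero
      rw [← hp, h0] at this
      simp at this
    calc (minpoly K lam).natDegree ≤ p.natDegree :=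
          Polynomial.natDegree_le_of_dvd (minpoly.dvd K lam hpeval) hp0
      _ = 2 := by
          rw [hp]
          exact Polynomial.natDegree_quadratic one_ne_zero
  have hfKhigh : 2 ≤ (minpoly K lam).natDegree := by
    rw [minpoly.two_le_natDegree_iff hKint]
    intro hmem
    rcases hmem with ⟨k, hk⟩
    exact hlamK (hk ▸ k.2)
  have hfK : (minpoly K lam).natDegree = 2 := le_antisymm hfKlow hfKhigh
  -- tower
  set L : IntermediateField K ℝ := adjoin K {lam} with hL
  have hfinL : Module.finrank K L = 2 := by
    rw [hL]
    show Module.finrank K K⟮lam⟯ = 2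
    rw [adjoin.finrank hKint, hfK]
  have hres : restrictScalars ℚ L = E := by
    rw [hL]
    refine (restrictScalars_adjoin_eq_sup (K := K) (S := ({lam} : Set ℝ))).trans ?_
    rw [show adjoin ℚ {lam} = E from rfl]
    exact sup_eq_right.mpr hKE
  have htower : Module.finrank ℚ K * Module.finrank K L = Module.finrank ℚ L :=
    Module.finrank_mul_finrank ℚ K L
  have hfinQL : Module.finrank ℚ (restrictScalars ℚ L) = 2 * m := by rw [hres, hfinE]
  have : Module.finrank ℚ L = 2 * m := hfinQL
  rw [this, hfinL, hfinK] at htower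
  omega

lemma minpoly_eval_ne (m : ℕ) (hm : 1 ≤ m) (lam : ℝ) (hQint : IsIntegral ℚ lam)
    (hdeg : (minpoly ℚ lam).natDegree = 2 * m) :
    ∀ r : ℚ, (minpoly ℚ lam).eval r ≠ 0 := by
  intro r hr
  have hFirr := minpoly.irreducible hQint
  have hF0 : minpoly ℚ lam ≠ 0 := (minpoly.monic hQint).ne_zero
  have hdvd : X - C r ∣ minpoly ℚ lam := Polynomial.dvd_iff_isRoot.mpr hr
  have hassoc : Associated (X - C r) (minpoly ℚ lam) :=
    (Polynomial.irreducible_X_sub_C r).associated_of_dvd hFirr hdvd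
  have hdegeq := Polynomial.degree_eq_degree_of_associated hassoc
  rw [Polynomial.degree_X_sub_C, Polynomial.degree_eq_natDegree hF0, hdeg] at hdegeq
  have h1 : (1 : WithBot ℕ) = ((2 * m : ℕ) : WithBot ℕ) := by exact_mod_cast hdegeq
  have h2 : (1 : ℕ) = 2 * m := by exact_mod_cast h1
  omega

set_option maxHeartbeats 1000000 in
set_option synthInstance.maxHeartbeats 1000000 in
lemma key_identity (m : ℕ) (hm : 1 ≤ m) (lam : ℝ) (hQint : IsIntegral ℚ lam)
    (hdeg : (minpoly ℚ lam).natDegree = 2 * m)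
    (hinv : Polynomial.aeval lam⁻¹ (minpoly ℚ lam) = 0)
    (hne : lam⁻¹ ≠ lam)
    (hGdeg : (minpoly ℚ (lam + lam⁻¹)).natDegree = m) :
    pairProd (((minpoly ℚ lam).aroots ℂ).toList)
      = (((minpoly ℚ lam).eval 1 : ℚ) : ℂ) * (((minpoly ℚ lam).eval (-1) : ℚ) : ℂ) *
        (∏ α ∈ ((minpoly ℚ (lam + lam⁻¹)).aroots ℂ).toFinset,
          ∏ β ∈ (((minpoly ℚ (lam + lam⁻¹)).aroots ℂ).toFinset).erase α, (α - β)) ^ 2 := by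
  classical
  have hlam0 : lam ≠ 0 := by rintro rfl; simp at hne
  set μ := lam + lam⁻¹ with hμ
  set F := minpoly ℚ lam with hFdef
  set G := minpoly ℚ μ with hGdef
  have hinvint : IsIntegral ℚ lam⁻¹ := ⟨F, minpoly.monic hQint, hinv⟩
  have hμint : IsIntegral ℚ μ := hQint.add hinvint
  have hFirr := minpoly.irreducible hQint
  have hGirr := minpoly.irreducible hμint
  have hFmonic : F.Monic := minpoly.monic hQint
  have hGmonic : G.Monic := minpoly.monic hμint
  have hF0 : F ≠ 0 := hFmonic.ne_zero
  have hG0 : G ≠ 0 := hGmonic.ne_zero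
  have hFsep : F.Separable := hFirr.separable
  have hGsep : G.Separable := hGirr.separable
  have hFmapsep : (F.map (algebraMap ℚ ℂ)).Separable := hFsep.map
  have hFmap0 : F.map (algebraMap ℚ ℂ) ≠ 0 := by
    simpa using (Polynomial.map_ne_zero_iff (algebraMap ℚ ℂ).injective).mpr hF0
  -- rational evaluations of F are nonzero
  have hevalF : ∀ r : ℚ, F.eval r ≠ 0 := by
    intro r hr
    have hdvd : X - C r ∣ F := Polynomial.dvd_iff_isRoot.mpr hr
    have hassoc : Associated (X - C r) F :=
      (Polynomial.irreducible_X_sub_C r).associated_of_dvd hFirr hdvd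
    have hdegeq := Polynomial.degree_eq_degree_of_associated hassoc
    rw [Polynomial.degree_X_sub_C, Polynomial.degree_eq_natDegree hF0, hdeg] at hdegeq
    have : (1 : WithBot ℕ) = ((2 * m : ℕ) : WithBot ℕ) := by exact_mod_cast hdegeq
    have : (1 : ℕ) = 2 * m := by exact_mod_cast this
    omega
  -- sets of roots
  set sG : Finset ℂ := (G.aroots ℂ).toFinset with hsG
  have hGsplits : Splits (G.map (algebraMap ℚ ℂ)) := IsAlgClosed.splits _
  have hGnodup : (G.aroots ℂ).Nodup := Polynomial.nodup_roots (hGsep.map (f := algebraMap ℚ ℂ))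
  have hcardG : (G.aroots ℂ).card = m := by
    rw [← hGdeg, ← Polynomial.natDegree_map (algebraMap ℚ ℂ)]
    exact hGsplits.natDegree_eq_card_roots.symm
  have hcardsG : sG.card = m := by
    rw [hsG, Multiset.toFinset_card_of_nodup hGnodup, hcardG]
  -- the quadratic factors
  set Q : ℂ → ℂ[X] := fun α => X ^ 2 + C (-α) * X + C 1 with hQdef
  have hQmonic : ∀ α : ℂ, (Q α).Monic := by
    intro α
    have h : degree (C (-α) * X + C 1) < ((2 : ℕ) : WithBot ℕ) := by
      refine lt_of_le_of_lt (Polynomial.degree_linear_le) ?_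
      norm_num
    simpa [hQdef, add_assoc] using Polynomial.monic_X_pow_add h
  have hQdeg : ∀ α : ℂ, (Q α).natDegree = 2 := by
    intro α
    have := Polynomial.natDegree_quadratic (a := (1:ℂ)) (b := -α) (c := 1) one_ne_zero
    simpa [hQdef] using this
  set P : ℂ[X] := ∏ α ∈ sG, Q α with hPdef
  have hPmonic : P.Monic := Polynomial.monic_prod_of_monic _ _ fun α _ => hQmonic α
  have hPdeg : P.natDegree = 2 * m := by
    rw [hPdef, Polynomial.natDegree_prod _ _ (fun α _ => (hQmonic α).ne_zero)]
    simp only [hQdeg]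
    rw [Finset.sum_const, hcardsG, smul_eq_mul, mul_comm]
  -- every root of F.map is a root of some Q α
  have hroot_pair : ∀ β : ℂ, (F.map (algebraMap ℚ ℂ)).IsRoot β →
      ∃ α ∈ sG, β ^ 2 - α * β + 1 = 0 := by
    intro β hβ
    have hβar : β ∈ F.aroots ℂ := by
      rw [Polynomial.mem_roots hFmap0]
      exact hβ
    set σ : ℚ⟮lam⟯ →ₐ[ℚ] ℂ := (algHomAdjoinIntegralEquiv ℚ hQint).symm ⟨β, hβar⟩ with hσ
    have hσgen : σ (AdjoinSimple.gen ℚ lam) = β :=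
      algHomAdjoinIntegralEquiv_symm_apply_gen ℚ hQint _
    have hβ0 : β ≠ 0 := by
      rintro rfl
      have : (F.map (algebraMap ℚ ℂ)).eval 0 = algebraMap ℚ ℂ (F.eval 0) := by
        rw [Polynomial.eval_map, ← Polynomial.eval₂_at_apply (algebraMap ℚ ℂ) 0]
        norm_num
      rw [Polynomial.IsRoot, this] at hβ
      exact hevalF 0 (by simpa [this] using hβ)
    -- the element μ inside ℚ⟮lam⟯
    have hlamE : lam ∈ ℚ⟮lam⟯ := mem_adjoin_simple_self ℚ lam
    set μE : ℚ⟮lam⟯ := AdjoinSimple.gen ℚ lam + (AdjoinSimple.gen ℚ lam)⁻¹ with hμE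
    have hμEval : (algebraMap ℚ⟮lam⟯ ℝ) μE = μ := by
      rw [hμE]
      push_cast
      rfl
    have hμEroot : Polynomial.aeval μE G = 0 := by
      have h0 : Polynomial.aeval ((algebraMap ℚ⟮lam⟯ ℝ) μE) G = 0 := by
        rw [hμEval]; exact minpoly.aeval ℚ μ
      exact (Polynomial.aeval_algebraMap_eq_zero_iff ℝ μE G).mp h0
    set α : ℂ := σ μE with hα
    have hαroot : Polynomial.aeval α G = 0 := by
      rw [hα, Polynomial.aeval_algHom_apply, hμEroot, map_zero]
    have hαsG : α ∈ sG := by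
      rw [hsG, Multiset.mem_toFinset, Polynomial.mem_aroots]
      exact ⟨hG0, hαroot⟩
    refine ⟨α, hαsG, ?_⟩
    have hαβ : α = β + β⁻¹ := by
      rw [hα, hμE, map_add, map_inv₀, hσgen]
    rw [hαβ]
    field_simp
    ring
  -- F.map divides P
  have hFnodup : (F.aroots ℂ).Nodup := Polynomial.nodup_roots (hFsep.map (f := algebraMap ℚ ℂ))
  have hFmapprod : F.map (algebraMap ℚ ℂ)
      = ∏ β ∈ (F.aroots ℂ).toFinset, (X - C β) := by
    have h1 : F.map (algebraMap ℚ ℂ)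
        = (Multiset.map (fun β => X - C β) (F.aroots ℂ)).prod := by
      have := (IsAlgClosed.splits _).eq_prod_roots_of_monic (hFmonic.map (algebraMap ℚ ℂ))
      simpa [Polynomial.aroots_def] using this
    rw [h1, Finset.prod_eq_multiset_prod]
    congr 1
    rw [Multiset.toFinset_val, Multiset.dedup_eq_self.mpr hFnodup]
  have hFdvdP : F.map (algebraMap ℚ ℂ) ∣ P := by
    rw [hFmapprod]
    refine Finset.prod_dvd_of_coprime ?_ ?_
    · have hpair : Pairwise (Function.onFun IsCoprime fun β : ℂ => X - C β) :=
        Polynomial.pairwise_coprime_X_sub_C Function.injective_id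
      exact hpair.set_pairwise _
    · intro β hβmem
      have hβroot : (F.map (algebraMap ℚ ℂ)).IsRoot β := by
        have := Multiset.mem_toFinset.mp hβmem
        rw [Polynomial.mem_roots hFmap0] at this
        exact this
      obtain ⟨α, hαsG, hqα⟩ := hroot_pair β hβroot
      have : (X - C β) ∣ Q α := by
        rw [Polynomial.dvd_iff_isRoot]
        show Polynomial.eval β (Q α) = 0
        simp only [hQdef, Polynomial.eval_add, Polynomial.eval_mul, Polynomial.eval_pow,
          Polynomial.eval_X, Polynomial.eval_C]
        linear_combination hqα
      exact this.trans (Finset.dvd_prod_of_mem Q hαsG)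
  -- F.map = P
  have hFP : F.map (algebraMap ℚ ℂ) = P := by
    obtain ⟨u, hu⟩ := hFdvdP
    have hu0 : u ≠ 0 := by
      rintro rfl
      rw [mul_zero] at hu
      exact hPmonic.ne_zero hu
    have hdeg2 : (F.map (algebraMap ℚ ℂ)).natDegree = 2 * m := by
      rw [Polynomial.natDegree_map, hdeg]
    have hdegu : u.natDegree = 0 := by
      have := Polynomial.natDegree_mul (p := F.map (algebraMap ℚ ℂ)) (q := u) hFmap0 hu0
      rw [← hu, hPdeg, hdeg2] at this
      omega
    have huC : u = C (u.coeff 0) := Polynomial.eq_C_of_natDegree_eq_zero hdegu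
    have hlc : u.coeff 0 = 1 := by
      have h2 : P.leadingCoeff = (F.map (algebraMap ℚ ℂ)).leadingCoeff * u.leadingCoeff := by
        rw [hu, Polynomial.leadingCoeff_mul]
      rw [hPmonic.leadingCoeff, (hFmonic.map _).leadingCoeff, one_mul] at h2
      rw [Polynomial.leadingCoeff, hdegu] at h2
      exact h2.symm
    rw [hu, huC, hlc, map_one, mul_one]
  -- structure of the roots of each quadratic factor
  have hQdvd : ∀ α ∈ sG, Q α ∣ F.map (algebraMap ℚ ℂ) := by
    intro α hα
    rw [hFP]
    exact Finset.dvd_prod_of_mem Q hα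
  have hQpair : ∀ α ∈ sG, ∃ u v : ℂ,
      (Q α).roots = {u, v} ∧ u + v = α ∧ u * v = 1 ∧ u ≠ v := by
    intro α hα
    have hsepQ : (Q α).Separable := hFmapsep.of_dvd (hQdvd α hα)
    have hnodupQ : (Q α).roots.Nodup := Polynomial.nodup_roots hsepQ
    have hcard2 : (Q α).roots.card = 2 := by
      rw [Polynomial.splits_iff_card_roots.mp (IsAlgClosed.splits _), hQdeg]
    obtain ⟨u, v, huv⟩ := Multiset.card_eq_two.mp hcard2
    have hprodQ : Q α = (X - C u) * (X - C v) := by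
      have := (IsAlgClosed.splits _).eq_prod_roots_of_monic (hQmonic α)
      rw [huv] at this
      simpa using this
    have h0 : u * v = 1 := by
      have := congrArg (Polynomial.eval 0) hprodQ
      simp [hQdef] at this
      linear_combination -this
    have h1 : u + v = α := by
      have h2 := congrArg (Polynomial.eval 1) hprodQ
      simp only [hQdef, Polynomial.eval_add, Polynomial.eval_mul, Polynomial.eval_pow,
        Polynomial.eval_X, Polynomial.eval_C, Polynomial.eval_sub, Polynomial.eval_one] at h2
      linear_combination h2 + h0
    have hne2 : u ≠ v := by
      rw [huv] at hnodupQ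
      intro h
      subst h
      simp at hnodupQ
    exact ⟨u, v, huv, h1, h0, hne2⟩
  choose! b c hbcroots hbcsum hbcprod hbcne using hQpair
  -- finset of roots of F
  have harootsF : F.aroots ℂ = sG.val.bind fun α => (Q α).roots := by
    rw [Polynomial.aroots_def, hFP, hPdef]
    exact Polynomial.roots_prod Q sG hPmonic.ne_zero
  have hsFbiUnion : (F.aroots ℂ).toFinset = sG.biUnion (fun α => {b α, c α}) := by
    ext x
    simp only [Multiset.mem_toFinset, harootsF, Multiset.mem_bind, Finset.mem_biUnion,
      ]
    constructor
    · rintro ⟨α, hα, hx⟩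
      refine ⟨α, hα, ?_⟩
      rw [hbcroots α hα] at hx
      simpa using hx
    · rintro ⟨α, hα, hx⟩
      refine ⟨α, hα, ?_⟩
      rw [hbcroots α hα]
      simpa using hx
  -- lhs as finset product
  have hlistnodup : ((F.aroots ℂ).toList).Nodup := by
    have := hFnodup
    rwa [← Multiset.coe_toList (F.aroots ℂ), Multiset.coe_nodup] at this
  have hlisttoFinset : ((F.aroots ℂ).toList).toFinset = (F.aroots ℂ).toFinset := by
    ext x
    simp [List.mem_toFinset, Multiset.mem_toList]
  rw [pairProd_nodup _ hlistnodup, hlisttoFinset, hsFbiUnion]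
  rw [DF_biUnion sG b c (fun α hα => hbcsum α hα) (fun α hα => hbcprod α hα)
    (fun α hα => hbcne α hα)]
  -- evaluations
  have heval1 : (∏ α ∈ sG, (2 - α)) = ((F.eval 1 : ℚ) : ℂ) := by
    have h1 : Polynomial.eval 1 (F.map (algebraMap ℚ ℂ)) = algebraMap ℚ ℂ (F.eval 1) := by
      rw [Polynomial.eval_map, Polynomial.eval₂_at_one]
    have h2 : Polynomial.eval 1 (F.map (algebraMap ℚ ℂ)) = ∏ α ∈ sG, (2 - α) := by
      rw [hFP, hPdef, Polynomial.eval_prod]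
      refine Finset.prod_congr rfl fun α _ => ?_
      simp [hQdef]
      ring
    rw [← h2, h1]
    norm_num
  have heval2 : (∏ α ∈ sG, (2 + α)) = ((F.eval (-1) : ℚ) : ℂ) := by
    have h1 : Polynomial.eval (-1 : ℂ) (F.map (algebraMap ℚ ℂ))
        = algebraMap ℚ ℂ (F.eval (-1)) := by
      rw [Polynomial.eval_map,
        show ((-1 : ℂ)) = algebraMap ℚ ℂ (-1) by norm_num,
        Polynomial.eval₂_at_apply]
    have h2 : Polynomial.eval (-1 : ℂ) (F.map (algebraMap ℚ ℂ)) = ∏ α ∈ sG, (2 + α) := by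
      rw [hFP, hPdef, Polynomial.eval_prod]
      refine Finset.prod_congr rfl fun α _ => ?_
      simp [hQdef]
      ring
    rw [← h2, h1]
    norm_num
  rw [heval1, heval2]

set_option maxHeartbeats 1000000 in
set_option synthInstance.maxHeartbeats 1000000 in
lemma discr_rat (μ : ℝ) (hμint : IsIntegral ℚ μ) :
    ∃ q0 : ℚ, (q0 : ℂ) = ∏ α ∈ ((minpoly ℚ μ).aroots ℂ).toFinset,
      ∏ β ∈ (((minpoly ℚ μ).aroots ℂ).toFinset).erase α, (α - β) := by
  classical
  set G := minpoly ℚ μ with hGdef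
  set d := G.natDegree with hd
  have hGsep : G.Separable := (minpoly.irreducible hμint).separable
  have hGnodup : (G.aroots ℂ).Nodup := Polynomial.nodup_roots (hGsep.map (f := algebraMap ℚ ℂ))
  have hcardG : (G.aroots ℂ).card = d := by
    rw [hd, ← Polynomial.natDegree_map (algebraMap ℚ ℂ)]
    exact (IsAlgClosed.splits _).natDegree_eq_card_roots.symm
  set sG : Finset ℂ := (G.aroots ℂ).toFinset with hsG
  have hcardsG : sG.card = d := by
    rw [hsG, Multiset.toFinset_card_of_nodup hGnodup, hcardG]
  set L := ℚ⟮μ⟯ with hL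
  haveI : FiniteDimensional ℚ L := IntermediateField.adjoin.finiteDimensional hμint
  haveI : Fintype (L →ₐ[ℚ] ℂ) := IntermediateField.fintypeOfAlgHomAdjoinIntegral ℚ hμint
  set pb : PowerBasis ℚ L := IntermediateField.adjoin.powerBasis hμint with hpb
  have hdim : pb.dim = d := by
    rw [hpb, IntermediateField.adjoin.powerBasis_dim]
  set eA : (L →ₐ[ℚ] ℂ) ≃ {x // x ∈ G.aroots ℂ} := algHomAdjoinIntegralEquiv ℚ hμint with heA
  set eS : {x // x ∈ G.aroots ℂ} ≃ {x // x ∈ sG} :=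
    Equiv.subtypeEquivRight (fun x => (Multiset.mem_toFinset).symm) with heS
  set eF : {x // x ∈ sG} ≃ Fin pb.dim :=
    (sG.equivFin).trans (finCongr (by rw [hcardsG, hdim])) with heF
  set e : Fin pb.dim ≃ (L →ₐ[ℚ] ℂ) := (eF.symm.trans eS.symm).trans eA.symm with he
  set v : Fin pb.dim → ℂ := fun i => e i pb.gen with hv
  have hvval : ∀ i, v i = ((eS.symm (eF.symm i) : ℂ)) := by
    intro i
    rw [hv, he]
    simp only [Equiv.trans_apply]
    have h1 := algHomAdjoinIntegralEquiv_symm_apply_gen ℚ hμint (eS.symm (eF.symm i))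
    have hgen : pb.gen = AdjoinSimple.gen ℚ μ := rfl
    rw [heA, hgen]
    exact h1
  have hvinj : Function.Injective v := by
    intro i j hij
    rw [hvval, hvval] at hij
    have := Subtype.ext hij
    exact (eF.symm.trans eS.symm).injective this
  have himg : Finset.univ.image v = sG := by
    apply Finset.eq_of_subset_of_card_le
    · intro x hx
      rcases Finset.mem_image.mp hx with ⟨i, _, rfl⟩
      rw [hvval]
      exact Multiset.mem_toFinset.mpr (eS.symm (eF.symm i)).2
    · rw [Finset.card_image_of_injective _ hvinj, Finset.card_univ, Fintype.card_fin,
        hcardsG, hdim]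
  have key := Algebra.discr_powerBasis_eq_prod ℚ ℂ pb e
  set q1 : ℚ := Algebra.discr ℚ pb.basis with hq1
  refine ⟨(-1) ^ (∑ i : Fin pb.dim, (Finset.Ioi i).card) * q1, ?_⟩
  rw [← himg, prodErase_image v hvinj, prodErase_sq]
  rw [show (∏ i : Fin pb.dim, ∏ j ∈ Finset.Ioi i, (v j - v i) ^ 2)
      = algebraMap ℚ ℂ q1 from key.symm]
  rw [eq_ratCast (algebraMap ℚ ℂ) q1]
  push_cast
  ring

set_option maxHeartbeats 1000000 in
set_option synthInstance.maxHeartbeats 1000000 in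
/-- Let `m ≥ 1` and let `λ` be a Salem number of degree `2m` with
minimal polynomial `F` and discriminant `d_λ`. Then
`d_λ ≡ (-1)^m·F(1)·F(-1)` modulo nonzero rational squares:
`d_λ · (-1)^m·F(1)·F(-1)` is the square of a nonzero rational. -/
theorem stmt_17 (m : ℕ) (hm : 1 ≤ m) (lam : ℝ) (F : Polynomial ℚ)
    (hF : F = minpoly ℚ lam)
    (hlam : 1 < lam) (hint : IsIntegral ℤ lam)
    (hdeg : F.natDegree = 2 * m)
    (hinv : Polynomial.aeval lam⁻¹ F = 0)
    (hconj : ∀ z : ℂ, Polynomial.aeval z F = 0 →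
      z = (lam : ℂ) ∨ z = ((lam⁻¹ : ℝ) : ℂ) ∨ ‖z‖ = 1) :
    ∃ q : ℚ, q ≠ 0 ∧
      polyDisc F * (((-1) ^ m * F.eval 1 * F.eval (-1) : ℚ) : ℂ) = (q : ℂ) ^ 2 := by
  classical
  subst hF
  have hQint : IsIntegral ℚ lam := hint.tower_top
  have hne : lam⁻¹ ≠ lam := by
    intro h
    have hlam0 : lam ≠ 0 := by positivity
    have h1 : lam * lam = 1 := by
      field_simp at h
      linarith [h]
    nlinarith
  have hinvint : IsIntegral ℚ lam⁻¹ := ⟨minpoly ℚ lam, minpoly.monic hQint, hinv⟩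
  have hμint : IsIntegral ℚ (lam + lam⁻¹) := hQint.add hinvint
  have hGdeg : (minpoly ℚ (lam + lam⁻¹)).natDegree = m :=
    deg_trace_poly m lam hQint hdeg hinv hne
  have key := key_identity m hm lam hQint hdeg hinv hne hGdeg
  obtain ⟨q0, hq0⟩ := discr_rat (lam + lam⁻¹) hμint
  have hevalF := minpoly_eval_ne m hm lam hQint hdeg
  -- q0 is nonzero
  have hDFne : (∏ α ∈ ((minpoly ℚ (lam + lam⁻¹)).aroots ℂ).toFinset,
      ∏ β ∈ (((minpoly ℚ (lam + lam⁻¹)).aroots ℂ).toFinset).erase α, (α - β)) ≠ 0 := by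
    apply Finset.prod_ne_zero_iff.mpr
    intro α hα
    apply Finset.prod_ne_zero_iff.mpr
    intro β hβ
    have : β ≠ α := Finset.ne_of_mem_erase hβ
    exact sub_ne_zero.mpr (Ne.symm this)
  have hq0ne : q0 ≠ 0 := by
    intro h
    rw [h] at hq0
    exact hDFne (by exact_mod_cast hq0.symm)
  refine ⟨(minpoly ℚ lam).eval 1 * (minpoly ℚ lam).eval (-1) * q0, ?_, ?_⟩
  · exact mul_ne_zero (mul_ne_zero (hevalF 1) (hevalF (-1))) hq0ne
  · unfold polyDisc
    rw [hdeg]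
    have hNpow : ((-1 : ℂ)) ^ (2 * m * (2 * m - 1) / 2) = (-1) ^ m := by
      have h1 : 2 * m * (2 * m - 1) / 2 = m * (2 * m - 1) := by
        have : 2 * m * (2 * m - 1) = 2 * (m * (2 * m - 1)) := by ring
        rw [this, Nat.mul_div_cancel_left _ (by norm_num : 0 < 2)]
      rw [h1, mul_comm m (2 * m - 1), pow_mul]
      have hodd : Odd (2 * m - 1) := ⟨m - 1, by omega⟩
      rw [hodd.neg_one_pow]
    rw [hNpow, key, ← hq0]
    have hsq : ((-1 : ℂ)) ^ m * ((-1 : ℂ)) ^ m = 1 := by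
      rw [← pow_add]
      exact Even.neg_one_pow ⟨m, rfl⟩
    push_cast
    linear_combination ((((minpoly ℚ lam).eval 1 : ℚ) : ℂ) ^ 2 *
      (((minpoly ℚ lam).eval (-1) : ℚ) : ℂ) ^ 2 * (q0 : ℂ) ^ 2) * hsq
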